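/- arXiv:0909.4846 — 5 statements merged into one kernel-verified Lean document; each statement's English description precedes it below -/
import Mathlib

section
/- For every natural number n, the integral over (0,∞) of x^n · 2·K₀(2√x) dx equals (n!)², where K₀ is the modified Bessel function of the second kind of order 0. -/
open MeasureTheory Real

/-- The modified Bessel function of the second kind of order zero,
via the Sommerfeld integral representation. -/
noncomputable def K0 (y : ℝ) : ℝ := ∫ t in Set.Ioi (0:ℝ), Real.exp (-y * Real.cosh t)

open Set ENNReal

lemma aux_integrable_pow_exp (n : ℕ) {b : ℝ} (hb : 0 < b) :
    IntegrableOn (fun x : ℝ => x ^ n * Real.exp (-(b * x))) (Ioi 0) := by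
  have h := integrableOn_rpow_mul_exp_neg_mul_rpow
    (s := (n : ℝ)) (p := 1) (b := b) (neg_one_lt_zero.trans_le (Nat.cast_nonneg n)) one_pos hb
  refine h.congr_fun (fun x hx => ?_) measurableSet_Ioi
  dsimp only
  rw [Real.rpow_one, Real.rpow_natCast, neg_mul]

lemma aux_int_pow_exp (n : ℕ) {b : ℝ} (hb : 0 < b) :
    ∫ x in Ioi (0:ℝ), x ^ n * Real.exp (-(b * x)) = n.factorial / b ^ (n + 1) := by
  have h := Real.integral_rpow_mul_exp_neg_mul_Ioi (a := (n : ℝ) + 1) (r := b)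
    (by positivity) hb
  rw [setIntegral_congr_fun measurableSet_Ioi (fun x hx => ?_), h]
  · rw [Real.Gamma_nat_eq_factorial, show ((n : ℝ) + 1) = ((n + 1 : ℕ) : ℝ) by push_cast; ring,
      Real.rpow_natCast, one_div, inv_pow, div_eq_inv_mul]
  · rw [show ((n : ℝ) + 1 - 1) = (n : ℝ) by ring, Real.rpow_natCast]

lemma aux_two_K0 {x : ℝ} (hx : 0 < x) :
    ∫ s in Ioi (0:ℝ), Real.exp (-s - x / s) / s = 2 * K0 (2 * Real.sqrt x) := by
  have hsx : 0 < Real.sqrt x := Real.sqrt_pos.mpr hx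
  set f : ℝ → ℝ := fun t => Real.sqrt x * Real.exp t with hf
  have himg : f '' univ = Ioi 0 := by
    ext s
    simp only [image_univ, mem_range, mem_Ioi, hf]
    constructor
    · rintro ⟨t, rfl⟩; positivity
    · intro hs
      exact ⟨Real.log (s / Real.sqrt x), by
        rw [Real.exp_log (by positivity), mul_div_cancel₀ _ hsx.ne']⟩
  have hderiv : ∀ t ∈ (univ : Set ℝ),
      HasDerivWithinAt f (Real.sqrt x * Real.exp t) univ t := fun t _ =>
    ((Real.hasDerivAt_exp t).const_mul _).hasDerivWithinAt
  have hinj : InjOn f univ := by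
    intro a _ b _ h
    have := mul_left_cancel₀ hsx.ne' h
    exact Real.exp_injective this
  have hcv := integral_image_eq_integral_abs_deriv_smul MeasurableSet.univ hderiv hinj
    (fun s => Real.exp (-s - x / s) / s)
  rw [himg, setIntegral_univ] at hcv
  rw [hcv]
  have hpt : ∀ t : ℝ, |Real.sqrt x * Real.exp t| •
      (Real.exp (-(f t) - x / f t) / f t) = Real.exp (-(2 * Real.sqrt x) * Real.cosh t) := by
    intro t
    have h1 : 0 < Real.sqrt x * Real.exp t := by positivity
    simp only [hf]
    have hxs : x / (Real.sqrt x * Real.exp t) = Real.sqrt x * Real.exp (-t) := by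
      rw [div_eq_iff h1.ne', Real.exp_neg]
      have h2 := Real.exp_ne_zero t
      field_simp
      linear_combination (-1 : ℝ) * (Real.sq_sqrt hx.le)
    rw [abs_of_pos h1, smul_eq_mul, mul_div_cancel₀ _ h1.ne', hxs, Real.cosh_eq]
    ring_nf
  simp_rw [hpt]
  set F : ℝ → ℝ := fun u => Real.exp (-(2 * Real.sqrt x) * Real.cosh u) with hF
  have heven : ∀ t : ℝ, Real.exp (-(2 * Real.sqrt x) * Real.cosh t) = F |t| := by
    intro t; rw [hF]; simp [Real.cosh_abs]
  rw [integral_congr_ae (ae_of_all _ heven), integral_comp_abs, hF]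
  rfl

theorem stmt_2 (n : ℕ) :
    ∫ x in Set.Ioi (0:ℝ), (x : ℝ) ^ n * (2 * K0 (2 * Real.sqrt x))
      = ((n.factorial : ℝ)) ^ 2 := by
  set g : ℝ → ℝ → ℝ := fun x s => x ^ n * (Real.exp (-s - x / s) / s) with hg
  have hmeas : Measurable (fun p : ℝ × ℝ => ENNReal.ofReal (g p.1 p.2)) := by
    apply Measurable.ennreal_ofReal
    exact (measurable_fst.pow_const n).mul
      (((measurable_snd.neg.sub (measurable_fst.div measurable_snd)).exp).div measurable_snd)
  -- inner lintegral in x, for fixed s > 0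
  have hinner : ∀ s ∈ Ioi (0:ℝ), (∫⁻ x in Ioi (0:ℝ), ENNReal.ofReal (g x s))
      = ENNReal.ofReal ((n.factorial : ℝ) * (s ^ n * Real.exp (-s))) := by
    intro s hs
    have hs' : (0:ℝ) < s := hs
    have h1 : ∀ x ∈ Ioi (0:ℝ), ENNReal.ofReal (g x s)
        = ENNReal.ofReal (Real.exp (-s) / s) * ENNReal.ofReal (x ^ n * Real.exp (-(s⁻¹ * x))) := by
      intro x hx
      rw [← ENNReal.ofReal_mul (by positivity)]
      congr 1
      rw [hg]
      simp only []
      rw [show -s - x / s = -s + -(s⁻¹ * x) by rw [sub_eq_add_neg, div_eq_inv_mul], Real.exp_add]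
      ring
    rw [setLIntegral_congr_fun measurableSet_Ioi h1, lintegral_const_mul' _ _
      ENNReal.ofReal_ne_top,
      ← ofReal_integral_eq_lintegral_ofReal (aux_integrable_pow_exp n (inv_pos.mpr hs'))
        ((ae_restrict_iff' measurableSet_Ioi).mpr (ae_of_all _ fun x hx => by
        have hx' : (0:ℝ) < x := hx
        positivity)),
      aux_int_pow_exp n (inv_pos.mpr hs'),
      ← ENNReal.ofReal_mul (div_nonneg (Real.exp_nonneg _) hs'.le)]
    congr 1
    have hsne : s ≠ 0 := hs'.ne'
    field_simp
    rw [one_div, inv_pow, pow_succ]; field_simp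
  -- the double lintegral
  have hT : (∫⁻ x in Ioi (0:ℝ), ∫⁻ s in Ioi (0:ℝ), ENNReal.ofReal (g x s))
      = ENNReal.ofReal (((n.factorial : ℝ)) ^ 2) := by
    rw [lintegral_lintegral_swap hmeas.aemeasurable]
    rw [setLIntegral_congr_fun measurableSet_Ioi hinner]
    have hbase : IntegrableOn (fun s : ℝ => (n.factorial : ℝ) * (s ^ n * Real.exp (-(1 * s))))
        (Ioi 0) := (aux_integrable_pow_exp n one_pos).const_mul _
    have hint : IntegrableOn (fun s : ℝ => (n.factorial : ℝ) * (s ^ n * Real.exp (-s)))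
        (Ioi 0) := hbase.congr_fun (fun s _ => by norm_num) measurableSet_Ioi
    rw [← ofReal_integral_eq_lintegral_ofReal hint
      ((ae_restrict_iff' measurableSet_Ioi).mpr (ae_of_all _ fun s hs => by
        have hs' : (0:ℝ) < s := hs
        positivity))]
    congr 1
    rw [integral_const_mul]
    have : ∫ s in Ioi (0:ℝ), s ^ n * Real.exp (-s)
        = ∫ s in Ioi (0:ℝ), s ^ n * Real.exp (-(1 * s)) := by norm_num
    rw [this, aux_int_pow_exp n one_pos]
    simp [pow_two]
  -- a.e. finiteness of inner lintegral in s
  have hFmeas : Measurable (fun x => ∫⁻ s in Ioi (0:ℝ), ENNReal.ofReal (g x s)) :=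
    hmeas.lintegral_prod_right'
  have hfin : ∀ᵐ x ∂(volume.restrict (Ioi (0:ℝ))),
      (∫⁻ s in Ioi (0:ℝ), ENNReal.ofReal (g x s)) < ⊤ :=
    ae_lt_top hFmeas (by rw [hT]; exact ENNReal.ofReal_ne_top)
  -- pointwise identification
  have hpt : ∀ x ∈ Ioi (0:ℝ), x ^ n * (2 * K0 (2 * Real.sqrt x))
      = (∫⁻ s in Ioi (0:ℝ), ENNReal.ofReal (g x s)).toReal := by
    intro x hx
    have hx' : (0:ℝ) < x := hx
    rw [← aux_two_K0 hx']
    have h1 : ∫ s in Ioi (0:ℝ), Real.exp (-s - x / s) / s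
        = (∫⁻ s in Ioi (0:ℝ), ENNReal.ofReal (Real.exp (-s - x / s) / s)).toReal := by
      rw [integral_eq_lintegral_of_nonneg_ae]
      · exact (ae_restrict_iff' measurableSet_Ioi).mpr
          (ae_of_all _ fun s hs => by
            simp only [Pi.zero_apply]
            exact div_nonneg (Real.exp_nonneg _) (le_of_lt hs))
      · exact (((measurable_id.neg.sub ((measurable_const).div measurable_id)).exp).div
          measurable_id).aestronglyMeasurable
    have h2 : (∫⁻ s in Ioi (0:ℝ), ENNReal.ofReal (g x s))
        = ENNReal.ofReal (x ^ n) * ∫⁻ s in Ioi (0:ℝ),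
          ENNReal.ofReal (Real.exp (-s - x / s) / s) := by
      rw [← lintegral_const_mul' _ _ ENNReal.ofReal_ne_top]
      refine lintegral_congr fun s => ?_
      rw [← ENNReal.ofReal_mul (by positivity)]
    rw [h1, h2, ENNReal.toReal_mul, ENNReal.toReal_ofReal (by positivity)]
  calc ∫ x in Ioi (0:ℝ), x ^ n * (2 * K0 (2 * Real.sqrt x))
      = ∫ x in Ioi (0:ℝ), (∫⁻ s in Ioi (0:ℝ), ENNReal.ofReal (g x s)).toReal :=
        setIntegral_congr_fun measurableSet_Ioi hpt
    _ = (∫⁻ x in Ioi (0:ℝ), ∫⁻ s in Ioi (0:ℝ), ENNReal.ofReal (g x s)).toReal :=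
        integral_toReal hFmeas.aemeasurable hfin
    _ = ((n.factorial : ℝ)) ^ 2 := by rw [hT, ENNReal.toReal_ofReal (by positivity)]
end

section
/- For every natural number r ≥ 1 and every natural number n, the integral over (0,∞) of x^n · (2/(r·x^{(r-1)/r})) · K₀(2·x^{1/(2r)}) dx equals ((rn)!)². -/
open MeasureTheory Real Set

-- Lemma A: 2*K0(2√u) as an integral in s
lemma lemA {u : ℝ} (hu : 0 < u) :
    ∫ s in Ioi (0:ℝ), Real.exp (-s - u/s) / s = 2 * K0 (2 * u ^ ((1:ℝ)/2)) := by
  set c : ℝ := u ^ ((1:ℝ)/2) with hc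
  have hc0 : 0 < c := rpow_pos_of_pos hu _
  have hcsq : c * c = u := by
    rw [hc, ← rpow_add hu]; norm_num
  -- substitution s = c * exp t
  have hderiv : ∀ t ∈ (univ : Set ℝ),
      HasDerivWithinAt (fun t => c * Real.exp t) (c * Real.exp t) univ t := by
    intro t _
    exact ((Real.hasDerivAt_exp t).const_mul c).hasDerivWithinAt
  have hinj : InjOn (fun t => c * Real.exp t) univ := by
    intro a _ b _ h
    simpa [hc0.ne'] using Real.exp_injective (mul_left_cancel₀ hc0.ne' h)
  have himg : (fun t => c * Real.exp t) '' univ = Ioi (0:ℝ) := by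
    ext s; simp only [image_univ, mem_range, mem_Ioi]
    constructor
    · rintro ⟨t, rfl⟩; positivity
    · intro hs; exact ⟨Real.log (s / c), by
        rw [Real.exp_log (by positivity)]; field_simp⟩
  have key := integral_image_eq_integral_abs_deriv_smul MeasurableSet.univ hderiv hinj
      (fun s => Real.exp (-s - u/s) / s)
  rw [himg] at key
  rw [key, Measure.restrict_univ]
  have heq : ∀ t : ℝ, |c * Real.exp t| • (Real.exp (-(c * Real.exp t) - u/(c * Real.exp t)) / (c * Real.exp t))
      = Real.exp (-(2*c) * Real.cosh |t|) := by
    intro t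
    have he : (0:ℝ) < c * Real.exp t := by positivity
    rw [Real.cosh_abs, Real.cosh_eq, abs_of_pos he, smul_eq_mul]
    rw [mul_comm, div_mul_cancel₀ _ he.ne']
    congr 1
    have : u / (c * Real.exp t) = c * Real.exp (-t) := by
      rw [← hcsq, Real.exp_neg]; field_simp
    rw [this, Real.exp_neg]
    field_simp
    ring
  calc ∫ t, |c * Real.exp t| • (Real.exp (-(c * Real.exp t) - u/(c * Real.exp t)) / (c * Real.exp t))
      = ∫ t : ℝ, Real.exp (-(2*c) * Real.cosh |t|) := by
        exact integral_congr_ae (Filter.Eventually.of_forall heq)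
    _ = 2 * ∫ t in Ioi (0:ℝ), Real.exp (-(2*c) * Real.cosh t) := integral_comp_abs (f := fun t => Real.exp (-(2*c) * Real.cosh t))
    _ = 2 * K0 (2 * c) := rfl

lemma gamma_nat_integrable {b : ℝ} (hb : 0 < b) (m : ℕ) :
    IntegrableOn (fun u => u ^ m * Real.exp (-(b*u))) (Ioi (0:ℝ)) := by
  have := integrableOn_rpow_mul_exp_neg_mul_rpow (s := (m:ℝ)) (p := 1) (b := b)
    (by exact_mod_cast neg_one_lt_zero.trans_le (Nat.cast_nonneg m)) one_pos hb
  refine this.congr_fun (fun x hx => ?_) measurableSet_Ioi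
  dsimp only
  rw [rpow_one, rpow_natCast, neg_mul]

lemma gamma_nat {b : ℝ} (hb : 0 < b) (m : ℕ) :
    ∫ u in Ioi (0:ℝ), u ^ m * Real.exp (-(b * u)) = (1/b)^(m+1) * m.factorial := by
  have h := integral_rpow_mul_exp_neg_mul_Ioi (a := (m:ℝ)+1) (r := b)
    (by positivity) hb
  rw [show ((m:ℝ)+1) - 1 = (m:ℝ) by ring] at h
  rw [setIntegral_congr_fun measurableSet_Ioi
    (fun x hx => by rw [← rpow_natCast x m]), h]
  rw [Real.Gamma_nat_eq_factorial,
    show ((m:ℝ)+1) = ((m+1 : ℕ) : ℝ) by push_cast; ring, rpow_natCast]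

lemma g_meas : Measurable (fun p : ℝ × ℝ => Real.exp (-p.2 - p.1/p.2) / p.2) := by
  fun_prop

lemma g_int {u : ℝ} (hu : 0 < u) :
    IntegrableOn (fun s => Real.exp (-s - u/s) / s) (Ioi (0:ℝ)) := by
  have hbound : IntegrableOn (fun s => Real.exp (-(1*s)) / u) (Ioi (0:ℝ)) :=
    by simpa [neg_mul, IntegrableOn] using (exp_neg_integrableOn_Ioi 0 one_pos).div_const u
  refine Integrable.mono' hbound ?_ ?_
  · exact (g_meas.comp (measurable_const.prodMk measurable_id)).aestronglyMeasurable
  · filter_upwards [ae_restrict_mem measurableSet_Ioi] with s hs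
    have hs : (0:ℝ) < s := hs
    rw [Real.norm_eq_abs, abs_of_nonneg (by positivity)]
    have h1 : Real.exp (-(u/s)) ≤ s / u := by
      rw [Real.exp_neg]
      rw [inv_le_comm₀ (Real.exp_pos _) (by positivity)]
      calc (s/u)⁻¹ = u/s := by rw [inv_div]
        _ ≤ Real.exp (u/s) := by
            have := Real.add_one_le_exp (u/s)
            nlinarith [div_pos hu hs]
    calc Real.exp (-s - u/s) / s = Real.exp (-s) * Real.exp (-(u/s)) / s := by
          rw [← Real.exp_add]; ring_nf
      _ ≤ Real.exp (-s) * (s/u) / s := by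
          gcongr
      _ = Real.exp (-(1*s)) / u := by field_simp

lemma core (m : ℕ) : ∫ u in Ioi (0:ℝ), 2 * u ^ m * K0 (2 * u ^ ((1:ℝ)/2))
    = (m.factorial : ℝ) ^ 2 := by
  rw [setIntegral_congr_fun measurableSet_Ioi
    (fun u hu => show 2 * u ^ m * K0 (2 * u ^ ((1:ℝ)/2))
        = u ^ m * ∫ s in Ioi (0:ℝ), Real.exp (-s - u/s) / s by
      rw [lemA hu]; ring)]
  have hsm : StronglyMeasurable (fun u : ℝ => ∫ s in Ioi (0:ℝ), Real.exp (-s - u/s) / s) :=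
    g_meas.stronglyMeasurable.integral_prod_right'
  rw [integral_eq_lintegral_of_nonneg_ae ?nn ?sm]
  case nn =>
    filter_upwards [ae_restrict_mem measurableSet_Ioi] with u hu
    have hu : (0:ℝ) < u := hu
    have : 0 ≤ ∫ s in Ioi (0:ℝ), Real.exp (-s - u/s) / s :=
      setIntegral_nonneg measurableSet_Ioi (fun s hs => by
        have : (0:ℝ) < s := hs; positivity)
    positivity
  case sm =>
    exact ((measurable_id.pow_const m).aestronglyMeasurable.mul hsm.aestronglyMeasurable)
  -- turn inner integral into lintegral
  have step2 : ∫⁻ u in Ioi (0:ℝ), ENNReal.ofReal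
        (u ^ m * ∫ s in Ioi (0:ℝ), Real.exp (-s - u/s) / s)
      = ∫⁻ u in Ioi (0:ℝ), ∫⁻ s in Ioi (0:ℝ),
          ENNReal.ofReal (u ^ m * (Real.exp (-s - u/s) / s)) := by
    refine setLIntegral_congr_fun measurableSet_Ioi ?_
    intro u hu
    have hu : (0:ℝ) < u := hu
    dsimp only
    rw [ENNReal.ofReal_mul (by positivity),
      ofReal_integral_eq_lintegral_ofReal (g_int hu) ?_, ← lintegral_const_mul' _ _
        ENNReal.ofReal_ne_top]
    · congr 1 with s
      rw [← ENNReal.ofReal_mul (by positivity)]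
    · filter_upwards [ae_restrict_mem measurableSet_Ioi] with s hs
      have : (0:ℝ) < s := hs; positivity
  rw [step2]
  rw [lintegral_lintegral_swap (by
    apply Measurable.aemeasurable
    apply ENNReal.measurable_ofReal.comp
    exact (measurable_fst.pow_const m).mul g_meas)]
  -- inner integral over u
  have step4 : ∫⁻ s in Ioi (0:ℝ), (∫⁻ u in Ioi (0:ℝ),
        ENNReal.ofReal (u ^ m * (Real.exp (-s - u/s) / s)))
      = ∫⁻ s in Ioi (0:ℝ),
        ENNReal.ofReal ((m.factorial : ℝ) * (s ^ m * Real.exp (-s))) := by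
    refine setLIntegral_congr_fun measurableSet_Ioi ?_
    intro s hs
    have hs : (0:ℝ) < s := hs
    have hpt : ∀ u : ℝ, ENNReal.ofReal (u ^ m * (Real.exp (-s - u/s) / s))
        = ENNReal.ofReal (Real.exp (-s) / s) * ENNReal.ofReal (u ^ m * Real.exp (-((1/s) * u))) := by
      intro u
      rw [← ENNReal.ofReal_mul (by positivity)]
      congr 1
      rw [show -s - u/s = -s + -((1/s)*u) by ring, Real.exp_add]
      ring
    simp_rw [hpt]
    rw [lintegral_const_mul' _ _ ENNReal.ofReal_ne_top,
      ← ofReal_integral_eq_lintegral_ofReal (gamma_nat_integrable (by positivity) m) ?_,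
      gamma_nat (by positivity) m, ← ENNReal.ofReal_mul (by positivity)]
    · congr 1
      rw [one_div_one_div, pow_succ]
      field_simp
    · filter_upwards [ae_restrict_mem measurableSet_Ioi] with u hu
      have : (0:ℝ) < u := hu; positivity
  rw [step4]
  -- outer integral over s
  have hptf : ∀ s : ℝ, ENNReal.ofReal ((m.factorial : ℝ) * (s ^ m * Real.exp (-s)))
      = ENNReal.ofReal (m.factorial : ℝ) * ENNReal.ofReal (s ^ m * Real.exp (-(1 * s))) := by
    intro s
    rw [← ENNReal.ofReal_mul (by positivity), one_mul]
  simp_rw [hptf]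
  rw [lintegral_const_mul' _ _ ENNReal.ofReal_ne_top,
    ← ofReal_integral_eq_lintegral_ofReal (gamma_nat_integrable one_pos m) ?_,
    gamma_nat one_pos m, ← ENNReal.ofReal_mul (by positivity)]
  · rw [ENNReal.toReal_ofReal (by positivity)]
    norm_num [sq]
  · filter_upwards [ae_restrict_mem measurableSet_Ioi] with u hu
    have : (0:ℝ) < u := hu; positivity

theorem stmt_3 (r : ℕ) (hr : 1 ≤ r) (n : ℕ) :
    ∫ x in Set.Ioi (0:ℝ),
      (x : ℝ) ^ n *
        (2 / ((r : ℝ) * x ^ (((r : ℝ) - 1) / (r : ℝ))) * K0 (2 * x ^ (1 / (2 * (r : ℝ)))))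
      = ((r * n).factorial : ℝ) ^ 2 := by
  have hr0 : (0:ℝ) < r := Nat.cast_pos.mpr hr
  have key := integral_comp_rpow_Ioi_of_pos
    (g := fun u => 2 * u ^ (r*n) * K0 (2 * u ^ ((1:ℝ)/2))) (p := 1/(r:ℝ)) (by positivity)
  rw [← core (r*n), ← key]
  refine setIntegral_congr_fun measurableSet_Ioi (fun x hx => ?_)
  have hx : (0:ℝ) < x := hx
  have h1 : (x ^ ((1:ℝ)/r)) ^ ((1:ℝ)/2) = x ^ (1/(2*(r:ℝ))) := by
    rw [← Real.rpow_mul hx.le]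
    congr 1
    field_simp
  have h2 : (x ^ ((1:ℝ)/r)) ^ (r*n) = x ^ n := by
    rw [← Real.rpow_natCast (x ^ ((1:ℝ)/r)) (r*n), ← Real.rpow_mul hx.le,
      ← Real.rpow_natCast x n]
    congr 1
    push_cast
    field_simp
  have h3 : x ^ (((r:ℝ)-1)/r) * x ^ ((1:ℝ)/r - 1) = 1 := by
    rw [← Real.rpow_add hx, show ((r:ℝ)-1)/r + ((1:ℝ)/r - 1) = 0 by field_simp; ring, Real.rpow_zero]
  have hX : (0:ℝ) < x ^ (((r:ℝ)-1)/r) := rpow_pos_of_pos hx _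
  have h4 : x ^ ((1:ℝ)/r - 1) = (x ^ (((r:ℝ)-1)/r))⁻¹ :=
    eq_inv_of_mul_eq_one_left (by rw [mul_comm]; exact h3)
  simp only [smul_eq_mul, h1, h2, h4]
  field_simp
end

section
/- For every integer r ≥ 2, the Krein integral ∫₀^∞ (-ln W(x²))/(1+x²) dx is finite, where W(x) = (1/(2r·x^{(2r-1)/(2r)})) · e^{-x^{1/(2r)}}. -/
open MeasureTheory Real

lemma contOn_log_div : ContinuousOn (fun x : ℝ => Real.log x / (1 + x ^ 2)) (Set.Ioi 0) := by
  intro x hx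
  have hx0 : (0:ℝ) < x := hx
  exact ((Real.continuousAt_log hx0.ne').div
    ((continuous_const.add (continuous_pow 2)).continuousAt) (by show (1:ℝ) + x ^ 2 ≠ 0; positivity)).continuousWithinAt

lemma contOn_rpow_div (e : ℝ) :
    ContinuousOn (fun x : ℝ => x ^ e / (1 + x ^ 2)) (Set.Ioi 0) := by
  intro x hx
  have hx0 : (0:ℝ) < x := hx
  exact (((Real.continuousAt_rpow_const x e (Or.inl hx0.ne')).div
    ((continuous_const.add (continuous_pow 2)).continuousAt) (by show (1:ℝ) + x ^ 2 ≠ 0; positivity))).continuousWithinAt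

lemma int_log_div : IntegrableOn (fun x : ℝ => Real.log x / (1 + x ^ 2)) (Set.Ioi 0) := by
  have hsplit : Set.Ioc (0:ℝ) 1 ∪ Set.Ioi 1 = Set.Ioi 0 := Set.Ioc_union_Ioi_eq_Ioi zero_le_one
  rw [← hsplit]
  apply IntegrableOn.union
  · -- on (0,1]
    have hg : IntegrableOn (fun x : ℝ => 2 * x ^ (-(1:ℝ)/2)) (Set.Ioc 0 1) := by
      have h := intervalIntegral.intervalIntegrable_rpow' (a := 0) (b := 1)
        (r := -(1:ℝ)/2) (by norm_num)
      rw [intervalIntegrable_iff_integrableOn_Ioc_of_le zero_le_one] at h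
      exact h.const_mul 2
    refine Integrable.mono' hg
      ((contOn_log_div.mono (by intro x hx; exact hx.1)).aestronglyMeasurable
        measurableSet_Ioc) ?_
    filter_upwards [ae_restrict_mem measurableSet_Ioc] with x hx
    obtain ⟨hx0, hx1⟩ := hx
    have hlog : |Real.log x| ≤ 2 * x ^ (-(1:ℝ)/2) := by
      rw [abs_of_nonpos (Real.log_nonpos hx0.le hx1)]
      have h := Real.log_le_rpow_div (x := x⁻¹) (by positivity) one_half_pos
      rw [Real.log_inv] at h
      calc -Real.log x ≤ x⁻¹ ^ ((1:ℝ)/2) / (1/2) := h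
        _ = 2 * x ^ (-(1:ℝ)/2) := by
            rw [← Real.rpow_neg_one x, ← Real.rpow_mul hx0.le]
            norm_num
            ring
    have hden : (0:ℝ) < 1 + x ^ 2 := by positivity
    rw [Real.norm_eq_abs, abs_div, abs_of_pos hden]
    calc |Real.log x| / (1 + x ^ 2) ≤ |Real.log x| := by
          apply div_le_self (abs_nonneg _); nlinarith
      _ ≤ 2 * x ^ (-(1:ℝ)/2) := hlog
  · -- on (1,∞)
    have hg : IntegrableOn (fun x : ℝ => 2 * x ^ (-(3:ℝ)/2)) (Set.Ioi 1) :=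
      (integrableOn_Ioi_rpow_of_lt (by norm_num) zero_lt_one).const_mul 2
    refine Integrable.mono' hg
      ((contOn_log_div.mono (Set.Ioi_subset_Ioi zero_le_one)).aestronglyMeasurable
        measurableSet_Ioi) ?_
    filter_upwards [ae_restrict_mem measurableSet_Ioi] with x hx
    have hx1 : (1:ℝ) < x := hx
    have hx0 : (0:ℝ) < x := lt_trans zero_lt_one hx1
    have hden : (0:ℝ) < 1 + x ^ 2 := by positivity
    have hx2 : (0:ℝ) < x ^ 2 := by positivity
    have hlog : Real.log x ≤ 2 * x ^ ((1:ℝ)/2) := by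
      have h := Real.log_le_rpow_div hx0.le one_half_pos
      calc Real.log x ≤ x ^ ((1:ℝ)/2) / (1/2) := h
        _ = 2 * x ^ ((1:ℝ)/2) := by ring
    rw [Real.norm_eq_abs, abs_div, abs_of_pos hden,
      abs_of_nonneg (Real.log_nonneg hx1.le)]
    calc Real.log x / (1 + x ^ 2) ≤ (2 * x ^ ((1:ℝ)/2)) / x ^ 2 := by
          apply div_le_div₀ (by positivity) hlog hx2 (by nlinarith)
      _ = 2 * x ^ (-(3:ℝ)/2) := by
          rw [mul_div_assoc]
          congr 1
          rw [← Real.rpow_natCast x 2, ← Real.rpow_sub hx0]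
          norm_num

lemma int_rpow_div (e : ℝ) (he0 : 0 ≤ e) (he1 : e < 1) :
    IntegrableOn (fun x : ℝ => x ^ e / (1 + x ^ 2)) (Set.Ioi 0) := by
  have hsplit : Set.Ioc (0:ℝ) 1 ∪ Set.Ioi 1 = Set.Ioi 0 := Set.Ioc_union_Ioi_eq_Ioi zero_le_one
  rw [← hsplit]
  apply IntegrableOn.union
  · have hg : IntegrableOn (fun _ : ℝ => (1:ℝ)) (Set.Ioc (0:ℝ) 1) :=
      integrableOn_const measure_Ioc_lt_top.ne
    refine Integrable.mono' hg
      (((contOn_rpow_div e).mono (by intro x hx; exact hx.1)).aestronglyMeasurable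
        measurableSet_Ioc) ?_
    filter_upwards [ae_restrict_mem measurableSet_Ioc] with x hx
    obtain ⟨hx0, hx1⟩ := hx
    have hden : (0:ℝ) < 1 + x ^ 2 := by positivity
    rw [Real.norm_eq_abs, abs_div, abs_of_pos hden,
      abs_of_nonneg (Real.rpow_nonneg hx0.le e)]
    have h1 : x ^ e ≤ 1 := Real.rpow_le_one hx0.le hx1 he0
    have h2 : (1:ℝ) ≤ 1 + x ^ 2 := by nlinarith
    calc x ^ e / (1 + x ^ 2) ≤ 1 / 1 := div_le_div₀ (by norm_num) h1 one_pos h2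
      _ = 1 := by norm_num
  · have hg : IntegrableOn (fun x : ℝ => x ^ (e - 2)) (Set.Ioi 1) :=
      integrableOn_Ioi_rpow_of_lt (by linarith) zero_lt_one
    refine Integrable.mono' hg
      (((contOn_rpow_div e).mono (Set.Ioi_subset_Ioi zero_le_one)).aestronglyMeasurable
        measurableSet_Ioi) ?_
    filter_upwards [ae_restrict_mem measurableSet_Ioi] with x hx
    have hx1 : (1:ℝ) < x := hx
    have hx0 : (0:ℝ) < x := lt_trans zero_lt_one hx1
    have hden : (0:ℝ) < 1 + x ^ 2 := by positivity
    have hx2 : (0:ℝ) < x ^ 2 := by positivity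
    rw [Real.norm_eq_abs, abs_div, abs_of_pos hden,
      abs_of_nonneg (Real.rpow_nonneg hx0.le e)]
    calc x ^ e / (1 + x ^ 2) ≤ x ^ e / x ^ 2 := by
          apply div_le_div₀ (Real.rpow_nonneg hx0.le e) le_rfl hx2 (by nlinarith)
      _ = x ^ (e - 2) := by
          rw [← Real.rpow_natCast x 2, ← Real.rpow_sub hx0]
          norm_num

theorem stmt_8 (r : ℕ) (hr : 2 ≤ r) :
    MeasureTheory.IntegrableOn
      (fun x : ℝ =>
        (-Real.log
            (1 / (2 * (r : ℝ) * (x ^ 2) ^ ((2 * (r : ℝ) - 1) / (2 * (r : ℝ)))) *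
              Real.exp (-((x ^ 2) ^ (1 / (2 * (r : ℝ))))))) / (1 + x ^ 2))
      (Set.Ioi (0:ℝ)) := by
  have hR2 : (2:ℝ) ≤ (r:ℝ) := by exact_mod_cast hr
  have hR0 : (0:ℝ) < (r:ℝ) := by linarith
  set R : ℝ := (r:ℝ) with hRdef
  have hg : IntegrableOn
      (fun x : ℝ => Real.log (2 * R) * (1 + x ^ 2)⁻¹
        + ((2 * R - 1) / R) * (Real.log x / (1 + x ^ 2))
        + x ^ ((1:ℝ)/R) / (1 + x ^ 2)) (Set.Ioi (0:ℝ)) := by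
    refine (((integrable_inv_one_add_sq.const_mul _).integrableOn).add
      (int_log_div.const_mul _)).add (int_rpow_div ((1:ℝ)/R) (by positivity) ?_)
    rw [div_lt_one hR0]; linarith
  refine hg.congr_fun (fun x hx => ?_) measurableSet_Ioi
  have hx0 : (0:ℝ) < x := hx
  have hx2 : (0:ℝ) < x ^ 2 := by positivity
  have hrp : (0:ℝ) < (x ^ 2) ^ ((2 * R - 1) / (2 * R)) := Real.rpow_pos_of_pos hx2 _
  have hden : (0:ℝ) < 1 + x ^ 2 := by positivity
  have hb : ((x:ℝ) ^ 2) ^ ((1:ℝ) / (2 * R)) = x ^ ((1:ℝ)/R) := by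
    rw [← Real.rpow_natCast x 2, ← Real.rpow_mul hx0.le]
    congr 1
    push_cast
    field_simp
  have hlog : Real.log
      (1 / (2 * R * (x ^ 2) ^ ((2 * R - 1) / (2 * R))) *
        Real.exp (-((x ^ 2) ^ (1 / (2 * R)))))
      = -(Real.log (2 * R) + ((2 * R - 1) / (2 * R)) * (2 * Real.log x))
        - x ^ ((1:ℝ)/R) := by
    rw [Real.log_mul (by positivity) (Real.exp_ne_zero _), Real.log_exp,
      one_div, Real.log_inv, Real.log_mul (by positivity) hrp.ne',
      Real.log_rpow hx2, hb]
    have : Real.log (x ^ 2) = 2 * Real.log x := by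
      rw [← Real.rpow_natCast x 2, Real.log_rpow hx0]; norm_num
    rw [this]
    ring
  show _ = _
  rw [hlog]
  have hRne : R ≠ 0 := hR0.ne'
  field_simp
  ring
end

section
/- Let r and k be integers with r > |k| ≥ 1. Then for every natural number n, the integral over (0,∞) of x^n · (1/(2r·x^{(2r-1)/(2r)})) · e^{-x^{1/(2r)}} · sin(kπ·(2r-1)/(2r) + x^{1/(2r)}·tan(kπ/(2r))) dx equals 0. -/
open MeasureTheory Real Filter Set Topology

lemma aux_tendsto (s : ℂ) (hs : 0 < s.re) (m : ℕ) :
    Tendsto (fun t : ℝ => (t:ℂ)^m * Complex.exp (-(s * t))) atTop (𝓝 0) := by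
  rw [tendsto_zero_iff_norm_tendsto_zero]
  have hre : Tendsto (fun t : ℝ => |t|^m * Real.exp (-(s.re * t))) atTop (𝓝 0) := by
    have h1 : Tendsto (fun t : ℝ => ((s.re)^m)⁻¹ * ((s.re * t)^m * Real.exp (-(s.re * t))))
        atTop (𝓝 (((s.re)^m)⁻¹ * 0)) := by
      refine Tendsto.const_mul _ ?_
      exact (tendsto_pow_mul_exp_neg_atTop_nhds_zero m).comp
        (Tendsto.const_mul_atTop hs tendsto_id)
    rw [mul_zero] at h1
    apply h1.congr'
    filter_upwards [eventually_ge_atTop (0:ℝ)] with t ht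
    rw [abs_of_nonneg ht, mul_pow, ← mul_assoc, ← mul_assoc,
      inv_mul_cancel₀ (by positivity), one_mul]
  apply squeeze_zero_norm _ hre
  intro t
  have h1 : (-(s * t)).re = -(s.re * t) := by simp
  simp only [norm_norm, norm_mul, norm_pow, Complex.norm_exp,
    Complex.norm_real, h1, Real.norm_eq_abs, abs_abs, Real.abs_exp, le_refl]

lemma aux_integrable (s : ℂ) (hs : 0 < s.re) (m : ℕ) :
    IntegrableOn (fun t : ℝ => (t:ℂ)^m * Complex.exp (-(s * t))) (Ioi 0) := by
  have hmaj : IntegrableOn (fun t : ℝ => t ^ (m:ℝ) * Real.exp (-s.re * t ^ (1:ℝ))) (Ioi 0) :=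
    integrableOn_rpow_mul_exp_neg_mul_rpow (lt_of_lt_of_le neg_one_lt_zero (Nat.cast_nonneg m)) one_pos hs
  refine Integrable.mono' hmaj ?_ ?_
  · exact (Continuous.aestronglyMeasurable (by continuity)).restrict
  · filter_upwards [ae_restrict_mem measurableSet_Ioi] with t ht
    have h1 : (-(s * t)).re = -s.re * t := by simp
    simp only [norm_mul, norm_pow, Complex.norm_exp,
      Complex.norm_real, Real.norm_eq_abs, h1, abs_of_pos (mem_Ioi.mp ht), Real.rpow_natCast, Real.rpow_one]
    exact le_rfl

lemma aux_deriv (s : ℂ) (hs : s ≠ 0) (m : ℕ) (t : ℝ) :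
    HasDerivAt (fun u : ℝ => -((u:ℂ)^(m+1) * Complex.exp (-(s * u)) / s))
      ((t:ℂ)^(m+1) * Complex.exp (-(s * t))
        - ((m+1 : ℂ)/s) * ((t:ℂ)^m * Complex.exp (-(s * t)))) t := by
  have h1 : HasDerivAt (fun z : ℂ => -(z^(m+1) * Complex.exp (-(s * z)) / s))
      (((m+1 : ℂ) * (t:ℂ)^m * Complex.exp (-(s*t))
        + (t:ℂ)^(m+1) * (Complex.exp (-(s*t)) * (-s))) / s * (-1)) (t:ℂ) := by
    have hp : HasDerivAt (fun z : ℂ => z^(m+1)) ((m+1 : ℂ) * (t:ℂ)^m) (t:ℂ) := by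
      simpa using hasDerivAt_pow (m+1) (t:ℂ)
    have he : HasDerivAt (fun z : ℂ => Complex.exp (-(s * z)))
        (Complex.exp (-(s*t)) * (-s)) (t:ℂ) := by
      have : HasDerivAt (fun z : ℂ => -(s * z)) (-s) (t:ℂ) := by
        simpa using ((hasDerivAt_id (t:ℂ)).const_mul s).fun_neg
      exact this.cexp
    simpa [mul_comm, mul_assoc] using (((hp.mul he).div_const s).fun_neg)
  have h2 := h1.comp_ofReal
  convert h2 using 1
  field_simp
  ring

lemma aux_integral (s : ℂ) (hs : 0 < s.re) : ∀ m : ℕ,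
    ∫ t in Ioi (0:ℝ), (t:ℂ)^m * Complex.exp (-(s * t)) = m.factorial / s^(m+1) := by
  have hs0 : s ≠ 0 := fun h => by simp [h] at hs
  intro m
  induction m with
  | zero =>
    have hd : ∀ x ∈ Ici (0:ℝ), HasDerivAt (fun u : ℝ => -(Complex.exp (-(s * u)) / s))
        (((x:ℂ))^0 * Complex.exp (-(s * x))) x := by
      intro x _
      have he : HasDerivAt (fun z : ℂ => Complex.exp (-(s * z)))
          (Complex.exp (-(s*x)) * (-s)) (x:ℂ) := by
        have : HasDerivAt (fun z : ℂ => -(s * z)) (-s) (x:ℂ) := by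
          simpa using ((hasDerivAt_id (x:ℂ)).const_mul s).fun_neg
        exact this.cexp
      have h2 := ((he.div_const s).fun_neg).comp_ofReal
      convert h2 using 1
      field_simp
    have hlim : Tendsto (fun t : ℝ => -(Complex.exp (-(s * t)) / s)) atTop (𝓝 0) := by
      simpa using ((aux_tendsto s hs 0).div_const s).neg
    have key := integral_Ioi_of_hasDerivAt_of_tendsto' hd (aux_integrable s hs 0) hlim
    rw [key]
    simp [Nat.factorial]
  | succ m ih =>
    have hd : ∀ x ∈ Ici (0:ℝ), HasDerivAt (fun u : ℝ => -((u:ℂ)^(m+1) * Complex.exp (-(s * u)) / s))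
        ((x:ℂ)^(m+1) * Complex.exp (-(s * x))
          - ((m+1 : ℂ)/s) * ((x:ℂ)^m * Complex.exp (-(s * x)))) x :=
      fun x _ => aux_deriv s hs0 m x
    have hint : IntegrableOn (fun t : ℝ => (t:ℂ)^(m+1) * Complex.exp (-(s * t))
        - ((m+1 : ℂ)/s) * ((t:ℂ)^m * Complex.exp (-(s * t)))) (Ioi 0) :=
      (aux_integrable s hs (m+1)).sub ((aux_integrable s hs m).const_mul _)
    have hlim : Tendsto (fun t : ℝ => -((t:ℂ)^(m+1) * Complex.exp (-(s * t)) / s))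
        atTop (𝓝 0) := by
      simpa using ((aux_tendsto s hs (m+1)).div_const s).neg
    have key := integral_Ioi_of_hasDerivAt_of_tendsto' hd hint hlim
    rw [integral_sub (aux_integrable s hs (m+1)) ((aux_integrable s hs m).const_mul _),
      integral_const_mul, ih] at key
    have h0 : -(((0:ℝ):ℂ)^(m+1) * Complex.exp (-(s * (0:ℝ))) / s) = 0 := by
      simp
    rw [h0, sub_zero] at key
    have := sub_eq_zero.mp key
    rw [this]
    push_cast [Nat.factorial_succ]
    ring

lemma aux_sin (M : ℕ) (a θ : ℝ) (hc : 0 < Real.cos θ)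
    (hzero : Real.sin (a + (M + 1 : ℝ) * θ) = 0) :
    ∫ x in Ioi (0:ℝ), x ^ M * Real.exp (-x) * Real.sin (a + x * Real.tan θ) = 0 := by
  set s : ℂ := 1 - Complex.I * Real.tan θ with hs_def
  have hs : 0 < s.re := by simp [hs_def]
  have hF : ∀ x : ℝ, (x:ℂ)^M * Complex.exp (-(s*x)) * Complex.exp (Complex.I * a)
      = ((x ^ M * Real.exp (-x) : ℝ) : ℂ) *
        Complex.exp (((a + x * Real.tan θ : ℝ):ℂ) * Complex.I) := by
    intro x
    have harg : -(s*x) + Complex.I * a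
        = ((-x : ℝ):ℂ) + ((a + x * Real.tan θ : ℝ):ℂ) * Complex.I := by
      simp only [hs_def]; push_cast; ring
    rw [mul_assoc, ← Complex.exp_add, harg, Complex.exp_add, ← Complex.ofReal_exp]
    push_cast
    ring
  have hInt : IntegrableOn
      (fun x : ℝ => (x:ℂ)^M * Complex.exp (-(s*x)) * Complex.exp (Complex.I * a)) (Ioi 0) :=
    (aux_integrable s hs M).mul_const _
  have h1 : ∫ x in Ioi (0:ℝ), x ^ M * Real.exp (-x) * Real.sin (a + x * Real.tan θ)
      = (∫ x in Ioi (0:ℝ),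
          (x:ℂ)^M * Complex.exp (-(s*x)) * Complex.exp (Complex.I * a)).im := by
    have him := integral_im (𝕜 := ℂ) hInt
    simp only [RCLike.im_to_complex] at him
    rw [← him]
    refine setIntegral_congr_fun measurableSet_Ioi (fun x hx => ?_)
    rw [hF x]
    simp only [Complex.mul_im, Complex.ofReal_re, Complex.ofReal_im,
      Complex.exp_ofReal_mul_I_im, Complex.exp_ofReal_mul_I_re, zero_mul, add_zero, mul_zero]
  rw [h1, integral_mul_const, aux_integral s hs M]
  have hs1 : s ≠ 0 := fun h => by simp [h] at hs
  have hct : Real.cos θ * Real.tan θ = Real.sin θ := by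
    rw [Real.tan_eq_sin_div_cos]; field_simp
  have hsc : (Real.cos θ : ℂ) * s = Complex.exp (((-θ : ℝ):ℂ) * Complex.I) := by
    rw [Complex.exp_mul_I, ← Complex.ofReal_cos, ← Complex.ofReal_sin]
    simp only [hs_def, Real.cos_neg, Real.sin_neg, Complex.ofReal_neg]
    have hct' : (Real.cos θ : ℂ) * (Real.tan θ : ℂ) = (Real.sin θ : ℂ) := by
      exact_mod_cast congrArg (fun x : ℝ => (x : ℂ)) hct
    linear_combination -Complex.I * hct'
  have h2 : ((Real.cos θ : ℂ))^(M+1) * s^(M+1)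
      = Complex.exp (((-((M:ℝ)+1)*θ : ℝ):ℂ) * Complex.I) := by
    rw [← mul_pow, hsc, ← Complex.exp_nat_mul]
    congr 1
    push_cast
    ring
  have h4 : Complex.exp (((-((M:ℝ)+1)*θ : ℝ):ℂ) * Complex.I) *
      Complex.exp (((a + ((M:ℝ)+1)*θ : ℝ):ℂ) * Complex.I) = Complex.exp (Complex.I * a) := by
    rw [← Complex.exp_add]; congr 1; push_cast; ring
  have h3 : (M.factorial : ℂ) / s^(M+1) * Complex.exp (Complex.I * a)
      = ((M.factorial * (Real.cos θ)^(M+1) : ℝ) : ℂ) *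
        Complex.exp (((a + ((M:ℝ)+1)*θ : ℝ):ℂ) * Complex.I) := by
    rw [div_mul_eq_mul_div, div_eq_iff (pow_ne_zero _ hs1)]
    push_cast
    calc (M.factorial : ℂ) * Complex.exp (Complex.I * a)
        = ↑M.factorial * (Complex.exp (((-((M:ℝ)+1)*θ : ℝ):ℂ) * Complex.I) *
            Complex.exp (((a + ((M:ℝ)+1)*θ : ℝ):ℂ) * Complex.I)) := by rw [h4]
      _ = ↑M.factorial * ((((Real.cos θ : ℂ))^(M+1) * s^(M+1)) *
            Complex.exp (((a + ((M:ℝ)+1)*θ : ℝ):ℂ) * Complex.I)) := by rw [h2]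
      _ = _ := by push_cast; ring
  rw [h3]
  simp only [Complex.mul_im, Complex.exp_ofReal_mul_I_im, Complex.ofReal_re, Complex.ofReal_im,
    Complex.exp_ofReal_mul_I_re]
  rw [hzero]
  ring

theorem stmt_11 (r : ℕ) (k : ℤ) (hk : 1 ≤ |k|) (hrk : |k| < (r : ℤ)) (n : ℕ) :
    ∫ x in Set.Ioi (0:ℝ),
      (x : ℝ) ^ n *
        (1 / (2 * (r : ℝ) * x ^ ((2 * (r : ℝ) - 1) / (2 * (r : ℝ)))) *
          Real.exp (-(x ^ (1 / (2 * (r : ℝ))))) *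
          Real.sin ((k : ℝ) * Real.pi * (2 * (r : ℝ) - 1) / (2 * (r : ℝ)) +
            x ^ (1 / (2 * (r : ℝ))) * Real.tan ((k : ℝ) * Real.pi / (2 * (r : ℝ)))))
      = 0 := by
  have hr1 : (1:ℤ) < (r:ℤ) := lt_of_le_of_lt hk hrk
  have hr : (1:ℝ) < (r:ℝ) := by exact_mod_cast hr1
  have hr0 : (0:ℝ) < r := by linarith
  have h2r : (0:ℝ) < 2 * r := by linarith
  have hkr : |(k:ℝ)| < (r:ℝ) := by
    rw [← Int.cast_abs]
    exact_mod_cast hrk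
  set a : ℝ := (k : ℝ) * Real.pi * (2 * (r : ℝ) - 1) / (2 * (r : ℝ)) with ha_def
  set θ : ℝ := (k : ℝ) * Real.pi / (2 * (r : ℝ)) with hθ_def
  set g : ℝ → ℝ := fun y =>
      y ^ n *
        (1 / (2 * (r : ℝ) * y ^ ((2 * (r : ℝ) - 1) / (2 * (r : ℝ)))) *
          Real.exp (-(y ^ (1 / (2 * (r : ℝ))))) *
          Real.sin (a + y ^ (1 / (2 * (r : ℝ))) * Real.tan θ)) with hg_def
  have hsub := integral_comp_rpow_Ioi g (p := 2 * (r:ℝ)) h2r.ne'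
  rw [show (∫ x in Set.Ioi (0:ℝ),
      (x : ℝ) ^ n *
        (1 / (2 * (r : ℝ) * x ^ ((2 * (r : ℝ) - 1) / (2 * (r : ℝ)))) *
          Real.exp (-(x ^ (1 / (2 * (r : ℝ))))) *
          Real.sin ((k : ℝ) * Real.pi * (2 * (r : ℝ) - 1) / (2 * (r : ℝ)) +
            x ^ (1 / (2 * (r : ℝ))) * Real.tan ((k : ℝ) * Real.pi / (2 * (r : ℝ))))))
      = ∫ y in Ioi (0:ℝ), g y from rfl, ← hsub]
  have heq : ∀ x ∈ Ioi (0:ℝ),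
      (|2 * (r:ℝ)| * x ^ (2 * (r:ℝ) - 1)) • g (x ^ (2 * (r:ℝ)))
        = x ^ (2 * r * n) * Real.exp (-x) * Real.sin (a + x * Real.tan θ) := by
    intro x hx
    have hx0 : (0:ℝ) < x := mem_Ioi.mp hx
    have e1 : (x ^ (2 * (r:ℝ))) ^ ((2 * (r : ℝ) - 1) / (2 * (r : ℝ))) = x ^ (2 * (r:ℝ) - 1) := by
      rw [← Real.rpow_mul hx0.le]
      congr 1
      field_simp
    have e2 : (x ^ (2 * (r:ℝ))) ^ (1 / (2 * (r : ℝ))) = x := by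
      rw [← Real.rpow_mul hx0.le]
      rw [mul_one_div, div_self h2r.ne', Real.rpow_one]
    have e3 : (x ^ (2 * (r:ℝ))) ^ n = x ^ ((2 * r * n : ℕ) : ℝ) := by
      rw [← Real.rpow_natCast (x ^ (2 * (r:ℝ))) n, ← Real.rpow_mul hx0.le]
      congr 1
      push_cast
      ring
    have hxp : (0:ℝ) < x ^ (2 * (r:ℝ) - 1) := Real.rpow_pos_of_pos hx0 _
    rw [hg_def]
    simp only [smul_eq_mul, e1, e2, e3, abs_of_pos h2r]
    rw [Real.rpow_natCast]
    field_simp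
  rw [setIntegral_congr_fun measurableSet_Ioi heq]
  apply aux_sin
  · apply Real.cos_pos_of_mem_Ioo
    constructor
    · rw [hθ_def, lt_div_iff₀ h2r]
      nlinarith [Real.pi_pos, abs_lt.mp hkr]
    · rw [hθ_def, div_lt_iff₀ h2r]
      nlinarith [Real.pi_pos, abs_lt.mp hkr]
  · have : a + ((2 * r * n : ℕ) + 1 : ℝ) * θ = ((k * (n + 1) : ℤ) : ℝ) * Real.pi := by
      rw [ha_def, hθ_def]
      push_cast
      field_simp
      ring
    rw [this, Real.sin_int_mul_pi]
end

section
/- Let r ≥ 2 and k be integers with r > |k| ≥ 1. If ε₁, ε₂ are distinct reals in (-1,1), then the two functions W̃_{ε₁} and W̃_{ε₂} defined by W̃_ε(x) = (1/(2r·x^{(2r-1)/(2r)})) · e^{-x^{1/(2r)}} · [1 + ε·sin(kπ·(2r-1)/(2r) + x^{1/(2r)}·tan(kπ/(2r)))] are distinct positive functions on (0,∞) having identical moments ∫₀^∞ x^n W̃_ε(x) dx = (2rn)! for all n; hence the Stieltjes moment problem for (2rn)! is indeterminate. -/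
open MeasureTheory Real Set Filter

lemma lap_int (z : ℂ) (hz : 0 < z.re) (m : ℕ) :
    IntegrableOn (fun t : ℝ => (t:ℂ)^m * Complex.exp (-(z*t))) (Ioi 0) := by
  have hmeas : AEStronglyMeasurable (fun t : ℝ => (t:ℂ)^m * Complex.exp (-(z*t)))
      (volume.restrict (Ioi 0)) := by
    apply Continuous.aestronglyMeasurable
    continuity
  have hbd : IntegrableOn (fun t : ℝ => t ^ (m:ℝ) * Real.exp (-z.re * t)) (Ioi 0) := by
    simpa using integrableOn_rpow_mul_exp_neg_mul_rpow (p := 1) (s := (m:ℝ)) (b := z.re)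
      (by exact_mod_cast neg_one_lt_zero.trans_le (Nat.cast_nonneg m)) one_pos hz
  refine Integrable.mono' hbd hmeas ?_
  filter_upwards [ae_restrict_mem measurableSet_Ioi] with t ht
  rw [norm_mul, norm_pow, Complex.norm_exp]
  simp only [Complex.norm_real, Real.norm_eq_abs, Complex.neg_re, Complex.mul_re,
    Complex.ofReal_re, Complex.ofReal_im, mul_zero, sub_zero]
  rw [abs_of_pos ht, ← Real.rpow_natCast, neg_mul]

lemma lap_tendsto (z : ℂ) (hz : 0 < z.re) (m : ℕ) :
    Tendsto (fun t : ℝ => (t:ℂ)^m * Complex.exp (-(z*t))) atTop (nhds 0) := by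
  apply squeeze_zero_norm' (a := fun t : ℝ => t ^ (m:ℝ) * Real.exp (-z.re * t))
  · filter_upwards [eventually_gt_atTop (0:ℝ)] with t ht
    rw [norm_mul, norm_pow, Complex.norm_exp]
    simp only [Complex.norm_real, Real.norm_eq_abs, Complex.neg_re, Complex.mul_re,
      Complex.ofReal_re, Complex.ofReal_im, mul_zero, sub_zero]
    rw [abs_of_pos ht, ← Real.rpow_natCast, neg_mul]
  · exact tendsto_rpow_mul_exp_neg_mul_atTop_nhds_zero _ _ hz

lemma lap_eq (z : ℂ) (hz : 0 < z.re) :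
    ∀ m : ℕ, ∫ t in Ioi (0:ℝ), (t:ℂ)^m * Complex.exp (-(z*t)) = (m.factorial : ℂ) / z^(m+1) := by
  have hz0 : z ≠ 0 := fun h => by simp [h] at hz
  intro m
  induction m with
  | zero =>
    have hderiv : ∀ t : ℝ, HasDerivAt (fun s : ℝ => -Complex.exp (-(z*s)) / z)
        (Complex.exp (-(z*t))) t := by
      intro t
      have h1 : HasDerivAt (fun y : ℂ => -Complex.exp (-(z*y)) / z)
          (Complex.exp (-(z*t))) (t:ℝ) := by
        have h2 : HasDerivAt (fun y : ℂ => Complex.exp (-(z*y)))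
            (Complex.exp (-(z*(t:ℂ))) * (-z)) (t:ℂ) := by
          have := (Complex.hasDerivAt_exp (-(z*(t:ℂ)))).comp (t:ℂ)
            (((hasDerivAt_id (t:ℂ)).const_mul z).neg)
          simpa [mul_comm, Function.comp_def] using this
        have := (h2.neg).div_const z
        convert this using 1
        · rfl
        · rfl
        · rfl
        · field_simp
      exact h1.comp_ofReal
    have := integral_Ioi_of_hasDerivAt_of_tendsto' (fun t _ => hderiv t)
      (by simpa using lap_int z hz 0) (m := 0) ?_
    · simpa [neg_div, one_div] using this
    · have := (lap_tendsto z hz 0).neg.div_const z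
      simpa using this
  | succ m ih =>
    set I : ℕ → ℂ := fun j => ∫ t in Ioi (0:ℝ), (t:ℂ)^j * Complex.exp (-(z*t)) with hI
    have hderiv : ∀ t : ℝ, HasDerivAt (fun s : ℝ => ((s:ℂ))^(m+1) * Complex.exp (-(z*s)))
        (((m+1:ℕ):ℂ) * (t:ℂ)^m * Complex.exp (-(z*t)) - z * ((t:ℂ)^(m+1) * Complex.exp (-(z*t)))) t := by
      intro t
      have h2 : HasDerivAt (fun y : ℂ => Complex.exp (-(z*y)))
          (Complex.exp (-(z*(t:ℂ))) * (-z)) (t:ℂ) := by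
        have := (Complex.hasDerivAt_exp (-(z*(t:ℂ)))).comp (t:ℂ)
          (((hasDerivAt_id (t:ℂ)).const_mul z).neg)
        simpa [mul_comm, Function.comp_def] using this
      have h3 := ((hasDerivAt_pow (m+1) ((t:ℂ))).mul h2).comp_ofReal (z := t)
      convert h3 using 1
      · rfl
      push_cast
      ring
    have hint1 : IntegrableOn (fun t : ℝ => ((m+1:ℕ):ℂ) * (t:ℂ)^m * Complex.exp (-(z*t))) (Ioi 0) := by
      simpa [mul_assoc, IntegrableOn] using (lap_int z hz m).const_mul ((m+1:ℕ):ℂ)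
    have hint2 : IntegrableOn (fun t : ℝ => z * ((t:ℂ)^(m+1) * Complex.exp (-(z*t)))) (Ioi 0) :=
      (lap_int z hz (m+1)).const_mul z
    have key := integral_Ioi_of_hasDerivAt_of_tendsto' (fun t _ => hderiv t)
      (hint1.sub hint2) (lap_tendsto z hz (m+1))
    rw [integral_sub hint1 hint2] at key
    simp only [mul_assoc] at key
    rw [integral_const_mul, integral_const_mul] at key
    simp only [Complex.ofReal_zero, zero_pow (Nat.succ_ne_zero m), zero_mul, sub_zero,
      zero_sub, sub_eq_zero] at key
    have hre : ∫ t in Ioi (0:ℝ), (t:ℂ)^(m+1) * Complex.exp (-(z*t)) =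
        ((m+1:ℕ):ℂ) * (∫ t in Ioi (0:ℝ), (t:ℂ)^m * Complex.exp (-(z*t))) / z := by
      rw [eq_div_iff hz0]
      push_cast at key ⊢
      linear_combination -key
    rw [hre, ih, Nat.factorial_succ, pow_succ, mul_div_assoc', div_div]
    push_cast
    ring_nf

lemma real_int (m : ℕ) : IntegrableOn (fun t : ℝ => t^m * Real.exp (-t)) (Ioi 0) := by
  have hbd : IntegrableOn (fun t : ℝ => t ^ (m:ℝ) * Real.exp (-1 * t)) (Ioi 0) := by
    simpa using integrableOn_rpow_mul_exp_neg_mul_rpow (p := 1) (s := (m:ℝ)) (b := 1)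
      (by exact_mod_cast neg_one_lt_zero.trans_le (Nat.cast_nonneg m)) one_pos one_pos
  apply hbd.congr_fun _ measurableSet_Ioi
  intro t ht
  simp only
  rw [Real.rpow_natCast, neg_one_mul]

lemma real_moment (m : ℕ) : ∫ t in Ioi (0:ℝ), t^m * Real.exp (-t) = (m.factorial : ℝ) := by
  have h := lap_eq 1 (by norm_num) m
  have h2 := integral_re ((lap_int 1 (by norm_num) m).congr_fun (fun t ht => rfl) measurableSet_Ioi)
  rw [h] at h2
  simp only [RCLike.re_to_complex] at h2
  have h3 : ∀ t ∈ Ioi (0:ℝ), ((t:ℂ)^m * Complex.exp (-(1*(t:ℂ)))).re = t^m * Real.exp (-t) := by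
    intro t _
    rw [one_mul, ← Complex.ofReal_pow, ← Complex.ofReal_neg, ← Complex.ofReal_exp,
      ← Complex.ofReal_mul, Complex.ofReal_re]
  rw [setIntegral_congr_fun measurableSet_Ioi h3] at h2
  rw [h2]
  simp

lemma sin_int (θ τ : ℝ) (m : ℕ) :
    IntegrableOn (fun t : ℝ => t^m * Real.exp (-t) * Real.sin (θ + τ * t)) (Ioi 0) := by
  refine Integrable.mono' (real_int m) ?_ ?_
  · apply Continuous.aestronglyMeasurable; continuity
  · filter_upwards [ae_restrict_mem measurableSet_Ioi] with t ht
    rw [norm_mul]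
    calc ‖t^m * Real.exp (-t)‖ * ‖Real.sin (θ + τ*t)‖
        ≤ ‖t^m * Real.exp (-t)‖ * 1 := by
          refine mul_le_mul_of_nonneg_left ?_ (norm_nonneg _)
          rw [Real.norm_eq_abs]
          exact abs_le.mpr ⟨Real.neg_one_le_sin _, Real.sin_le_one _⟩
      _ = t^m * Real.exp (-t) := by
          rw [mul_one, Real.norm_eq_abs,
            abs_of_nonneg (mul_nonneg (pow_nonneg (le_of_lt ht) m) (Real.exp_nonneg _))]

lemma sin_vanish (φ θ : ℝ) (hc : 0 < Real.cos φ) (m : ℕ) (j : ℤ)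
    (hθ : θ + (m+1)*φ = j*π) :
    ∫ t in Ioi (0:ℝ), t^m * Real.exp (-t) * Real.sin (θ + Real.tan φ * t) = 0 := by
  set τ := Real.tan φ with hτ
  set z : ℂ := 1 - τ * Complex.I with hzdef
  have hz : 0 < z.re := by simp [hzdef]
  have hpt : ∀ t ∈ Ioi (0:ℝ),
      (Complex.exp (θ * Complex.I) * ((t:ℂ)^m * Complex.exp (-(z*t)))).im
        = t^m * Real.exp (-t) * Real.sin (θ + τ * t) := by
    intro t _
    have he : Complex.exp (θ * Complex.I) * ((t:ℂ)^m * Complex.exp (-(z*t)))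
        = ((t^m * Real.exp (-t) : ℝ) : ℂ) * Complex.exp (((θ + τ*t : ℝ) : ℂ) * Complex.I) := by
      have hexp : -(z*(t:ℂ)) = ((-t : ℝ) : ℂ) + ((τ*t : ℝ) : ℂ) * Complex.I := by
        rw [hzdef]; push_cast; ring
      rw [hexp, Complex.exp_add,
        show (((θ + τ*t : ℝ)) : ℂ) * Complex.I = (θ:ℂ)*Complex.I + ((τ*t:ℝ):ℂ)*Complex.I by
          push_cast; ring,
        Complex.exp_add]
      push_cast
      ring
    rw [he, Complex.mul_im, Complex.ofReal_re, Complex.ofReal_im, Complex.exp_ofReal_mul_I_im]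
    simp
  have hint : IntegrableOn (fun t : ℝ =>
      Complex.exp (θ * Complex.I) * ((t:ℂ)^m * Complex.exp (-(z*t)))) (Ioi 0) :=
    (lap_int z hz m).const_mul _
  have h2 := integral_im hint
  simp only [RCLike.im_to_complex] at h2
  rw [integral_const_mul, lap_eq z hz m] at h2
  rw [← setIntegral_congr_fun measurableSet_Ioi hpt, h2]
  -- now show the im is 0
  have hcne : Real.cos φ ≠ 0 := ne_of_gt hc
  have hcc : ((Real.cos φ : ℝ) : ℂ) ≠ 0 := Complex.ofReal_ne_zero.mpr hcne
  have h1 : z = Complex.exp (((-φ : ℝ) : ℂ) * Complex.I) * ((Real.cos φ : ℝ) : ℂ)⁻¹ := by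
    rw [show (((-φ : ℝ)) : ℂ) = -(φ:ℂ) by push_cast; ring, Complex.exp_mul_I]
    rw [Complex.cos_neg, Complex.sin_neg, ← Complex.ofReal_cos, ← Complex.ofReal_sin]
    rw [hzdef, hτ, Real.tan_eq_sin_div_cos]
    have hccc : Complex.cos (φ:ℂ) ≠ 0 := by rw [← Complex.ofReal_cos]; exact hcc
    push_cast
    field_simp [hccc]
    ring
  have hz2 : z^(m+1) = Complex.exp (((((m:ℝ)+1) * (-φ) : ℝ) : ℂ) * Complex.I)
      * ((((Real.cos φ)^(m+1) : ℝ)) : ℂ)⁻¹ := by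
    rw [h1, mul_pow, ← Complex.exp_nat_mul]
    push_cast
    ring_nf
  have hzne : z ≠ 0 := by
    intro h; rw [h] at hz; simp at hz
  have hexp2 : Complex.exp ((((j:ℝ)*π : ℝ):ℂ) * Complex.I)
      * Complex.exp (((((m:ℝ)+1) * (-φ) : ℝ):ℂ) * Complex.I)
      = Complex.exp ((θ:ℂ) * Complex.I) := by
    rw [← Complex.exp_add, ← add_mul, ← Complex.ofReal_add]
    congr 2
    apply Complex.ofReal_inj.mpr
    push_cast
    linarith [hθ]
  have hval : Complex.exp (θ * Complex.I) * ((m.factorial : ℂ) / z^(m+1))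
      = ((m.factorial * (Real.cos φ)^(m+1) : ℝ) : ℂ)
        * Complex.exp ((((j : ℝ) * π : ℝ) : ℂ) * Complex.I) := by
    rw [hz2, ← hexp2]
    push_cast
    field_simp [Complex.exp_ne_zero]
  rw [hval, Complex.mul_im, Complex.ofReal_re, Complex.ofReal_im, Complex.exp_ofReal_mul_I_im]
  have hs : Real.sin ((j:ℝ) * π) = 0 := Real.sin_int_mul_pi j
  simp [hs]

lemma moment_full (φ θ : ℝ) (hc : 0 < Real.cos φ) (m : ℕ) (j : ℤ)
    (hθ : θ + (m+1)*φ = j*π) (ε : ℝ) :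
    ∫ t in Ioi (0:ℝ), t^m * Real.exp (-t) * (1 + ε * Real.sin (θ + Real.tan φ * t))
      = (m.factorial : ℝ) := by
  have hsplit : ∀ t ∈ Ioi (0:ℝ), t^m * Real.exp (-t) * (1 + ε * Real.sin (θ + Real.tan φ * t))
      = t^m * Real.exp (-t) + ε * (t^m * Real.exp (-t) * Real.sin (θ + Real.tan φ * t)) := by
    intro t _; ring
  rw [setIntegral_congr_fun measurableSet_Ioi hsplit,
    integral_add (real_int m) ((sin_int θ (Real.tan φ) m).const_mul ε),
    integral_const_mul, real_moment, sin_vanish φ θ hc m j hθ]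
  simp

theorem stmt_13 (r : ℕ) (hr : 2 ≤ r) (k : ℤ) (hk : 1 ≤ |k|) (hrk : |k| < (r : ℤ))
    (ε₁ ε₂ : ℝ) (hε₁ : ε₁ ∈ Set.Ioo (-1 : ℝ) 1) (hε₂ : ε₂ ∈ Set.Ioo (-1 : ℝ) 1)
    (hne : ε₁ ≠ ε₂)
    (W : ℝ → ℝ → ℝ)
    (hW : W = fun ε x =>
      1 / (2 * (r : ℝ) * x ^ ((2 * (r : ℝ) - 1) / (2 * (r : ℝ)))) *
        Real.exp (-(x ^ (1 / (2 * (r : ℝ))))) *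
        (1 + ε * Real.sin ((k : ℝ) * Real.pi * (2 * (r : ℝ) - 1) / (2 * (r : ℝ)) +
          x ^ (1 / (2 * (r : ℝ))) * Real.tan ((k : ℝ) * Real.pi / (2 * (r : ℝ)))))) :
    (∀ x : ℝ, 0 < x → 0 < W ε₁ x) ∧
    (∀ x : ℝ, 0 < x → 0 < W ε₂ x) ∧
    (∃ x : ℝ, 0 < x ∧ W ε₁ x ≠ W ε₂ x) ∧
    (∀ n : ℕ, ∫ x in Set.Ioi (0:ℝ), (x : ℝ) ^ n * W ε₁ x = ((2 * r * n).factorial : ℝ)) ∧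
    (∀ n : ℕ, ∫ x in Set.Ioi (0:ℝ), (x : ℝ) ^ n * W ε₂ x = ((2 * r * n).factorial : ℝ)) := by
  subst hW
  beta_reduce
  have hr2 : (2:ℝ) ≤ (r:ℝ) := by exact_mod_cast hr
  have hr0 : (0:ℝ) < 2 * (r:ℝ) := by linarith
  have h2rne : (2 * (r:ℝ)) ≠ 0 := ne_of_gt hr0
  set p : ℝ := 1 / (2 * (r : ℝ)) with hpdef
  set φ : ℝ := (k : ℝ) * Real.pi / (2 * (r : ℝ)) with hφdef
  set θ : ℝ := (k : ℝ) * Real.pi * (2 * (r : ℝ) - 1) / (2 * (r : ℝ)) with hθdef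
  have hp : 0 < p := by rw [hpdef]; positivity
  have hkr : |(k:ℝ)| < (r:ℝ) := by exact_mod_cast hrk
  have hk1 : (1:ℝ) ≤ |(k:ℝ)| := by exact_mod_cast hk
  have hkne : (k:ℝ) ≠ 0 := by
    intro h; rw [h, abs_zero] at hk1; linarith
  have hφlt : |φ| < π/2 := by
    rw [hφdef, abs_div, abs_mul, abs_of_pos Real.pi_pos, abs_of_pos hr0, div_lt_div_iff₀ hr0 two_pos]
    nlinarith [Real.pi_pos]
  have hc : 0 < Real.cos φ := by
    obtain ⟨h1, h2⟩ := abs_lt.mp hφlt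
    exact Real.cos_pos_of_mem_Ioo ⟨by linarith, h2⟩
  have hφne : φ ≠ 0 := by
    rw [hφdef]
    exact div_ne_zero (mul_ne_zero hkne (ne_of_gt Real.pi_pos)) h2rne
  have htan : Real.tan φ ≠ 0 := by
    rw [Real.tan_eq_sin_div_cos]
    apply div_ne_zero _ (ne_of_gt hc)
    intro h
    obtain ⟨m, hm⟩ := Real.sin_eq_zero_iff.mp h
    rcases eq_or_ne m 0 with rfl | hm0
    · rw [← hm] at hφne; simp at hφne
    · have h1 : (1:ℝ) ≤ |(m:ℝ)| := by exact_mod_cast Int.one_le_abs hm0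
      have h2 : |φ| = |(m:ℝ)| * π := by rw [← hm, abs_mul, abs_of_pos Real.pi_pos]
      rw [h2] at hφlt
      nlinarith [Real.pi_pos]
  -- positivity of densities
  have hsinb : ∀ ε : ℝ, ε ∈ Set.Ioo (-1:ℝ) 1 → ∀ s : ℝ, 0 < 1 + ε * Real.sin s := by
    intro ε hε s
    have habs : |ε * Real.sin s| < 1 := by
      rw [abs_mul]
      calc |ε| * |Real.sin s| ≤ |ε| * 1 := by
            exact mul_le_mul_of_nonneg_left
              (abs_le.mpr ⟨Real.neg_one_le_sin s, Real.sin_le_one s⟩) (abs_nonneg _)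
        _ = |ε| := mul_one _
        _ < 1 := abs_lt.mpr ⟨hε.1, hε.2⟩
    linarith [(abs_lt.mp habs).1]
  have hpos : ∀ ε : ℝ, ε ∈ Set.Ioo (-1:ℝ) 1 → ∀ x : ℝ, 0 < x →
      0 < 1 / (2 * (r : ℝ) * x ^ ((2 * (r : ℝ) - 1) / (2 * (r : ℝ)))) *
        Real.exp (-(x ^ p)) * (1 + ε * Real.sin (θ + x ^ p * Real.tan φ)) := by
    intro ε hε x hx
    have h1 : 0 < x ^ ((2 * (r : ℝ) - 1) / (2 * (r : ℝ))) := Real.rpow_pos_of_pos hx _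
    exact mul_pos (mul_pos (by positivity) (Real.exp_pos _)) (hsinb ε hε _)
  -- moments
  have hmom : ∀ ε : ℝ, ∀ n : ℕ,
      ∫ x in Set.Ioi (0:ℝ), (x:ℝ) ^ n *
        (1 / (2 * (r : ℝ) * x ^ ((2 * (r : ℝ) - 1) / (2 * (r : ℝ)))) *
          Real.exp (-(x ^ p)) * (1 + ε * Real.sin (θ + x ^ p * Real.tan φ)))
        = ((2 * r * n).factorial : ℝ) := by
    intro ε n
    have hθn : θ + ((2*r*n : ℕ) + 1) * φ = ((k*(n+1) : ℤ)) * π := by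
      rw [hθdef, hφdef]
      field_simp
      push_cast
      ring
    have hcov := integral_comp_rpow_Ioi_of_pos (p := p)
      (g := fun t : ℝ => t ^ (2*r*n) * Real.exp (-t) *
        (1 + ε * Real.sin (θ + Real.tan φ * t))) hp
    have hcongr : ∀ x ∈ Ioi (0:ℝ), (x:ℝ) ^ n *
        (1 / (2 * (r : ℝ) * x ^ ((2 * (r : ℝ) - 1) / (2 * (r : ℝ)))) *
          Real.exp (-(x ^ p)) * (1 + ε * Real.sin (θ + x ^ p * Real.tan φ)))
        = (p * x ^ (p - 1)) • ((x ^ p) ^ (2*r*n) * Real.exp (-(x ^ p)) *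
            (1 + ε * Real.sin (θ + Real.tan φ * (x ^ p)))) := by
      intro x hx
      have hx0 : (0:ℝ) < x := hx
      have hpow : (x ^ p) ^ (2*r*n) = x ^ n := by
        rw [← Real.rpow_natCast (x ^ p) (2*r*n), ← Real.rpow_mul hx0.le,
          ← Real.rpow_natCast x n]
        congr 1
        rw [hpdef]
        push_cast
        field_simp
      have hxp1 : x ^ (p - 1) = (x ^ ((2 * (r : ℝ) - 1) / (2 * (r : ℝ))))⁻¹ := by
        rw [← Real.rpow_neg hx0.le]
        congr 1
        rw [hpdef]
        field_simp
        ring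
      have hxA : x ^ ((2 * (r : ℝ) - 1) / (2 * (r : ℝ))) ≠ 0 :=
        ne_of_gt (Real.rpow_pos_of_pos hx0 _)
      rw [smul_eq_mul, mul_comm (Real.tan φ) (x ^ p), hpow, hxp1, hpdef]
      field_simp
    rw [setIntegral_congr_fun measurableSet_Ioi hcongr, hcov,
      moment_full φ θ hc (2*r*n) (k*(n+1)) hθn ε]
  -- distinctness
  have hexu : ∃ u : ℝ, 0 < u ∧ Real.sin (θ + Real.tan φ * u) ≠ 0 := by
    by_contra h
    push_neg at h
    set τ := Real.tan φ with hτdef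
    have h1 := h 1 one_pos
    rcases lt_or_gt_of_ne htan with hneg | hposτ
    · have hu2 : (0:ℝ) < 1 + π / (2 * (-τ)) := by
        have := div_pos Real.pi_pos (by linarith : (0:ℝ) < 2 * (-τ))
        linarith
      have h2 := h _ hu2
      have harg : θ + τ * (1 + π / (2 * (-τ))) = (θ + τ * 1) - π/2 := by
        field_simp
        ring
      rw [harg, Real.sin_sub_pi_div_two] at h2
      have hsq := Real.sin_sq_add_cos_sq (θ + τ * 1)
      rw [h1] at hsq
      nlinarith
    · have hu2 : (0:ℝ) < 1 + π / (2 * τ) := by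
        have := div_pos Real.pi_pos (by linarith : (0:ℝ) < 2 * τ)
        linarith
      have h2 := h _ hu2
      have harg : θ + τ * (1 + π / (2 * τ)) = (θ + τ * 1) + π/2 := by
        field_simp
        ring
      rw [harg, Real.sin_add_pi_div_two] at h2
      have hsq := Real.sin_sq_add_cos_sq (θ + τ * 1)
      rw [h1] at hsq
      nlinarith
  obtain ⟨u, hu, hsu⟩ := hexu
  refine ⟨hpos ε₁ hε₁, hpos ε₂ hε₂, ?_, hmom ε₁, hmom ε₂⟩
  refine ⟨u ^ (2 * (r:ℝ)), Real.rpow_pos_of_pos hu _, ?_⟩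
  have hxval : (u ^ (2 * (r:ℝ))) ^ p = u := by
    rw [← Real.rpow_mul hu.le, hpdef, mul_one_div_cancel h2rne, Real.rpow_one]
  set x : ℝ := u ^ (2 * (r:ℝ)) with hxdef
  have hx : 0 < x := Real.rpow_pos_of_pos hu _
  intro heq
  have hC : 0 < 1 / (2 * (r : ℝ) * x ^ ((2 * (r : ℝ) - 1) / (2 * (r : ℝ)))) *
      Real.exp (-(x ^ p)) := by
    have h1 : 0 < x ^ ((2 * (r : ℝ) - 1) / (2 * (r : ℝ))) := Real.rpow_pos_of_pos hx _
    positivity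
  have h2 := mul_left_cancel₀ (ne_of_gt hC) heq
  have h3 : (ε₁ - ε₂) * Real.sin (θ + x ^ p * Real.tan φ) = 0 := by linarith
  rcases mul_eq_zero.mp h3 with h4 | h4
  · exact hne (by linarith)
  · rw [hxval, mul_comm] at h4
    exact hsu h4
end
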